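/- If E_S[P^A_α(S)] ≤ 0 for uniform S ∈ {−1,1}^T (T a power of 2), then E_S[P_{cα}(S)] ≤ 0, where c = √2/(√2−1), P_α is the interval payoff maximizing Σ_i(|h(X_i)| − α√|X_i|) over all partitions, and P^A_α restricts to partitions into aligned dyadic intervals. -/

import Mathlib

/-- Map a Boolean bit to `±1`. -/
def pmOne (c : Bool) : ℝ := if c then 1 else -1

/-- Extension of a finite sequence by zeros. -/
def seqExt {T : ℕ} (s : Fin T → ℝ) (t : ℕ) : ℝ := if h : t < T then s ⟨t, h⟩ else 0

/-- `c : Fin (k+1) → ℕ` is the list of cut points of a partition of `[0, T)` into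
`k` contiguous nonempty intervals. -/
def IsCutSeq (T k : ℕ) (c : Fin (k + 1) → ℕ) : Prop :=
  StrictMono c ∧ c 0 = 0 ∧ c (Fin.last k) = T

/-- Value `Σ_i (|h(X_i)| - α √|X_i|)` of a partition given by cuts `c`. -/
noncomputable def cutValue (T k : ℕ) (α : ℝ) (s : Fin T → ℝ) (c : Fin (k + 1) → ℕ) : ℝ :=
  ∑ i : Fin k,
    (|∑ t ∈ Finset.Ico (c i.castSucc) (c i.succ), seqExt s t| -
      α * Real.sqrt ((c i.succ : ℝ) - (c i.castSucc : ℝ)))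

/-- Interval payoff function `P_α`: maximum over all partitions. -/
noncomputable def P (T : ℕ) (α : ℝ) (s : Fin T → ℝ) : ℝ :=
  sSup {v : ℝ | ∃ (k : ℕ) (c : Fin (k + 1) → ℕ), IsCutSeq T k c ∧ v = cutValue T k α s c}

/-- Aligned interval payoff function `P^A_α`: maximum over partitions into aligned
dyadic intervals `(j·2^i, (j+1)·2^i]`. -/
noncomputable def PA (T : ℕ) (α : ℝ) (s : Fin T → ℝ) : ℝ :=
  sSup {v : ℝ | ∃ (k : ℕ) (c : Fin (k + 1) → ℕ), IsCutSeq T k c ∧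
    (∀ i : Fin k, ∃ e j : ℕ, c i.castSucc = j * 2 ^ e ∧ c i.succ = (j + 1) * 2 ^ e) ∧
    v = cutValue T k α s c}


namespace StmtAux

lemma sqrt2_gt_one : 1 < Real.sqrt 2 := by
  have : (1:ℝ) = Real.sqrt 1 := (Real.sqrt_one).symm
  rw [this]
  exact Real.sqrt_lt_sqrt (by norm_num) (by norm_num)

noncomputable def Cc : ℝ := Real.sqrt 2 / (Real.sqrt 2 - 1)

lemma Cc_ge_one : 1 ≤ Cc := by
  have h := sqrt2_gt_one
  rw [Cc, le_div_iff₀ (by linarith)]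
  linarith

-- key inequality A: for 0 ≤ u ≤ h : (√2 - 1)√h + √u ≤ √(u+h)
lemma keyA {u h : ℝ} (hu : 0 ≤ u) (huh : u ≤ h) :
    (Real.sqrt 2 - 1) * Real.sqrt h + Real.sqrt u ≤ Real.sqrt (u + h) := by
  have hh : 0 ≤ h := le_trans hu huh
  have ha := Real.sqrt_nonneg h
  have hb := Real.sqrt_nonneg u
  have ha2 : Real.sqrt h ^ 2 = h := Real.sq_sqrt hh
  have hb2 : Real.sqrt u ^ 2 = u := Real.sq_sqrt hu
  have hba : Real.sqrt u ≤ Real.sqrt h := Real.sqrt_le_sqrt huh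
  have hs2 : Real.sqrt 2 ^ 2 = 2 := Real.sq_sqrt (by norm_num)
  have hs1 : 1 < Real.sqrt 2 := sqrt2_gt_one
  have hnn : 0 ≤ (Real.sqrt 2 - 1) * Real.sqrt h + Real.sqrt u := by
    have : (0:ℝ) ≤ Real.sqrt 2 - 1 := by linarith
    positivity
  rw [show u + h = Real.sqrt u ^2 + Real.sqrt h ^2 by rw [ha2, hb2]]
  rw [← Real.sqrt_sq hnn]
  apply Real.sqrt_le_sqrt
  nlinarith [mul_nonneg ha hb, mul_le_mul_of_nonneg_left hba ha]

-- key inequality B: x,y ≥ 0 : √(x+1)+√(y+1)-2 ≤ √2 √(x+y)  -- need x,y ≥ ... check x=y=0: 2-2=0 ≤ 0 ok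
lemma keyB {x y : ℝ} (hx : 0 ≤ x) (hy : 0 ≤ y) :
    Real.sqrt (x+1) + Real.sqrt (y+1) - 2 ≤ Real.sqrt 2 * Real.sqrt (x+y) := by
  have h1 : Real.sqrt (x+1) + Real.sqrt (y+1) ≤ Real.sqrt 2 * Real.sqrt (x+y+2) := by
    have ha := Real.sqrt_nonneg (x+1)
    have hb := Real.sqrt_nonneg (y+1)
    have ha2 : Real.sqrt (x+1) ^ 2 = x+1 := Real.sq_sqrt (by linarith)
    have hb2 : Real.sqrt (y+1) ^ 2 = y+1 := Real.sq_sqrt (by linarith)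
    have hs2 : Real.sqrt 2 ^ 2 = 2 := Real.sq_sqrt (by norm_num)
    have hc : Real.sqrt 2 * Real.sqrt (x+y+2) = Real.sqrt (2*(x+y+2)) := (Real.sqrt_mul (by norm_num) _).symm
    rw [hc]
    have hnn : 0 ≤ Real.sqrt (x+1) + Real.sqrt (y+1) := by positivity
    rw [← Real.sqrt_sq hnn]
    apply Real.sqrt_le_sqrt
    nlinarith [sq_nonneg (Real.sqrt (x+1) - Real.sqrt (y+1))]
  have h2 : Real.sqrt (x+y+2) ≤ Real.sqrt (x+y) + Real.sqrt 2 := by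
    have ha := Real.sqrt_nonneg (x+y)
    have hb := Real.sqrt_nonneg 2
    have ha2 : Real.sqrt (x+y) ^ 2 = x+y := Real.sq_sqrt (by linarith)
    have hs2 : Real.sqrt 2 ^ 2 = 2 := Real.sq_sqrt (by norm_num)
    rw [← Real.sqrt_sq (by positivity : (0:ℝ) ≤ Real.sqrt (x+y) + Real.sqrt 2)]
    apply Real.sqrt_le_sqrt
    nlinarith [mul_nonneg ha hb]
  have hs2 : Real.sqrt 2 ^ 2 = 2 := Real.sq_sqrt (by norm_num)
  nlinarith [Real.sqrt_nonneg 2, h1, h2, sqrt2_gt_one]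

def ChainFrom : ℕ → ℕ → List (ℕ × ℕ) → Prop
  | a, b, [] => a = b
  | a, b, p :: L => p.1 = a ∧ a < p.2 ∧ ChainFrom p.2 b L

lemma chainFrom_le : ∀ (L : List (ℕ × ℕ)) (a b : ℕ), ChainFrom a b L → a ≤ b
  | [], a, b, h => le_of_eq h
  | p :: L, a, b, h => le_trans (le_of_lt h.2.1) (chainFrom_le L _ _ h.2.2)

lemma chainFrom_append {a m b : ℕ} : ∀ {L1 L2 : List (ℕ × ℕ)},
    ChainFrom a m L1 → ChainFrom m b L2 → ChainFrom a b (L1 ++ L2) := by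
  intro L1
  induction L1 generalizing a with
  | nil => intro L2 h1 h2; cases h1; simpa using h2
  | cons p L ih => intro L2 h1 h2; exact ⟨h1.1, h1.2.1, ih h1.2.2 h2⟩

def AlignedL (L : List (ℕ × ℕ)) : Prop := ∀ p ∈ L, ∃ e j : ℕ, p.1 = j * 2^e ∧ p.2 = (j+1) * 2^e

noncomputable def ssum (L : List (ℕ × ℕ)) : ℝ :=
  (L.map fun p => Real.sqrt ((p.2 : ℝ) - (p.1 : ℝ))).sum

noncomputable def pval (α : ℝ) (f : ℕ → ℝ) (L : List (ℕ × ℕ)) : ℝ :=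
  (L.map fun p => |∑ t ∈ Finset.Ico p.1 p.2, f t| - α * Real.sqrt ((p.2 : ℝ) - (p.1 : ℝ))).sum

noncomputable def gfun (x : ℝ) : ℝ := (Real.sqrt (x+1) - 1) / (Real.sqrt 2 - 1)

lemma sum_Ico_chain (f : ℕ → ℝ) : ∀ (L : List (ℕ × ℕ)) (a b : ℕ), ChainFrom a b L →
    (∑ t ∈ Finset.Ico a b, f t) = (L.map fun p => ∑ t ∈ Finset.Ico p.1 p.2, f t).sum := by
  intro L
  induction L with
  | nil => intro a b h; cases h; simp
  | cons p L ih =>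
    intro a b h
    obtain ⟨h1, h2, h3⟩ := h
    have hb : p.2 ≤ b := chainFrom_le L _ _ h3
    rw [List.map_cons, List.sum_cons, ← ih p.2 b h3, h1,
      Finset.sum_Ico_consecutive f (le_of_lt (h1 ▸ h2)) hb]

lemma list_abs_sum : ∀ (l : List ℝ), |l.sum| ≤ (l.map abs).sum
  | [] => by simp
  | x :: l => by
    simp only [List.sum_cons, List.map_cons]
    exact (abs_add_le _ _).trans (by gcongr; exact list_abs_sum l)

lemma abs_sum_chain (f : ℕ → ℝ) (L : List (ℕ × ℕ)) (a b : ℕ) (h : ChainFrom a b L) :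
    |∑ t ∈ Finset.Ico a b, f t| ≤ (L.map fun p => |∑ t ∈ Finset.Ico p.1 p.2, f t|).sum := by
  rw [sum_Ico_chain f L a b h]
  refine (list_abs_sum _).trans ?_
  rw [List.map_map]
  exact le_of_eq rfl
lemma gfun_step {h u : ℝ} (hu : 0 ≤ u) (huh : u + 1 ≤ h) :
    Real.sqrt h + gfun u ≤ gfun (u + h) := by
  have hd : 0 < Real.sqrt 2 - 1 := by linarith [sqrt2_gt_one]
  have key := keyA (u := u + 1) (h := h) (by linarith) huh
  rw [gfun, gfun, le_div_iff₀ hd, add_mul, div_mul_cancel₀ _ hd.ne']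
  have : u + 1 + h = u + h + 1 := by ring
  rw [this] at key
  nlinarith [Real.sqrt_nonneg h]

lemma pre (len : ℕ) : ∀ M : ℕ, (∀ f : ℕ, 2^f ≤ len → 2^f ∣ M) →
    ∃ L, ChainFrom M (M + len) L ∧ AlignedL L ∧ ssum L ≤ gfun len := by
  induction len using Nat.strong_induction_on with
  | _ len ih =>
  intro M hdiv
  rcases Nat.eq_zero_or_pos len with h0 | hpos
  · subst h0
    refine ⟨[], by simp [ChainFrom], by simp [AlignedL], ?_⟩
    simp only [ssum, List.map_nil, List.sum_nil, gfun]
    norm_num [Real.sqrt_one]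
  · set e := Nat.log 2 len with he
    have h1 : 2^e ≤ len := Nat.pow_log_le_self 2 hpos.ne'
    have h2 : len < 2^(e+1) := Nat.lt_pow_succ_log_self (by norm_num) len
    have hdivM : 2^e ∣ M := hdiv e h1
    have hlt : len - 2^e < len := by
      have : 0 < 2^e := Nat.two_pow_pos e
      omega
    obtain ⟨L', hc, hal, hs⟩ := ih (len - 2^e) hlt (M + 2^e) (by
      intro f hf
      have hfe : f ≤ e := by
        by_contra hcon
        push_neg at hcon
        have : 2^(e+1) ≤ 2^f := Nat.pow_le_pow_right (by norm_num) hcon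
        omega
      exact Nat.dvd_add (dvd_trans (Nat.pow_dvd_pow 2 hfe) hdivM)
        (Nat.pow_dvd_pow 2 hfe))
    have hMe : M + 2^e + (len - 2^e) = M + len := by omega
    refine ⟨(M, M + 2^e) :: L', ⟨rfl, by omega, by rwa [← hMe]⟩, ?_, ?_⟩
    · intro p hp
      rcases List.mem_cons.mp hp with hp | hp
      · obtain ⟨j, hj⟩ := hdivM
        subst hp
        exact ⟨e, j, by rw [hj, mul_comm], by rw [hj, add_mul, one_mul, mul_comm]⟩
      · exact hal p hp
    · simp only [ssum, List.map_cons, List.sum_cons]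
      have hcast : ((M + 2^e : ℕ) : ℝ) - (M : ℕ) = ((2:ℝ))^e := by push_cast; ring
      rw [hcast]
      have hstep := gfun_step (h := (2:ℝ)^e) (u := ((len - 2^e : ℕ) : ℝ))
        (by positivity) (by
          have : (len - 2^e : ℕ) + 1 ≤ 2^e := by omega
          calc ((len - 2^e : ℕ) : ℝ) + 1 = (((len - 2^e) + 1 : ℕ) : ℝ) := by push_cast; ring
          _ ≤ ((2^e : ℕ) : ℝ) := by exact_mod_cast this
          _ = (2:ℝ)^e := by push_cast; ring)
      have hfin : ((len - 2^e : ℕ) : ℝ) + (2:ℝ)^e = (len : ℝ) := by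
        have : ((len - 2^e : ℕ) : ℝ) = (len : ℝ) - ((2^e : ℕ) : ℝ) := by
          exact Nat.cast_sub h1
        rw [this]; push_cast; ring
      rw [hfin] at hstep
      calc Real.sqrt ((2:ℝ)^e) + ssum L' ≤ Real.sqrt ((2:ℝ)^e) + gfun ((len - 2^e : ℕ) : ℝ) := by
            exact add_le_add_right hs _
        _ ≤ gfun len := hstep

lemma suf (len : ℕ) : ∀ M : ℕ, len ≤ M → (∀ f : ℕ, 2^f ≤ len → 2^f ∣ M) →
    ∃ L, ChainFrom (M - len) M L ∧ AlignedL L ∧ ssum L ≤ gfun len := by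
  induction len using Nat.strong_induction_on with
  | _ len ih =>
  intro M hlenM hdiv
  rcases Nat.eq_zero_or_pos len with h0 | hpos
  · subst h0
    refine ⟨[], by simp [ChainFrom], by simp [AlignedL], ?_⟩
    simp only [ssum, List.map_nil, List.sum_nil, gfun]
    norm_num [Real.sqrt_one]
  · set e := Nat.log 2 len with he
    have h1 : 2^e ≤ len := Nat.pow_log_le_self 2 hpos.ne'
    have h2 : len < 2^(e+1) := Nat.lt_pow_succ_log_self (by norm_num) len
    have hdivM : 2^e ∣ M := hdiv e h1
    have hepos : 0 < 2^e := Nat.two_pow_pos e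
    have hlt : len - 2^e < len := by omega
    obtain ⟨L', hc, hal, hs⟩ := ih (len - 2^e) hlt (M - 2^e) (by omega) (by
      intro f hf
      have hfe : f ≤ e := by
        by_contra hcon
        push_neg at hcon
        have : 2^(e+1) ≤ 2^f := Nat.pow_le_pow_right (by norm_num) hcon
        omega
      have hdvd : 2^f ∣ M := hdiv f (by omega)
      exact (Nat.dvd_sub hdvd (dvd_trans (Nat.pow_dvd_pow 2 hfe) dvd_rfl)))
    have hMe : M - len = (M - 2^e) - (len - 2^e) := by omega
    refine ⟨L' ++ [(M - 2^e, M)], ?_, ?_, ?_⟩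
    · rw [hMe]
      apply chainFrom_append hc
      exact ⟨rfl, by omega, rfl⟩
    · intro p hp
      rcases List.mem_append.mp hp with hp | hp
      · exact hal p hp
      · simp only [List.mem_singleton] at hp
        subst hp
        obtain ⟨j, hj⟩ := hdivM
        have hj1 : 1 ≤ j := by
          rcases Nat.eq_zero_or_pos j with h | h
          · subst h; simp at hj; omega
          · exact h
        refine ⟨e, j - 1, ?_, ?_⟩
        · show M - 2^e = (j-1) * 2^e
          rw [Nat.sub_mul, one_mul, hj, mul_comm]
        · show M = (j-1+1) * 2^e
          rw [Nat.sub_add_cancel hj1, hj, mul_comm]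
    · simp only [ssum, List.map_append, List.sum_append, List.map_cons, List.map_nil,
        List.sum_cons, List.sum_nil, add_zero]
      have hcast : ((M : ℕ) : ℝ) - ((M - 2^e : ℕ) : ℝ) = ((2:ℝ))^e := by
        have : ((M - 2^e : ℕ) : ℝ) = (M : ℝ) - ((2^e : ℕ) : ℝ) := by
          exact Nat.cast_sub (by omega)
        rw [this]; push_cast; ring
      rw [hcast]
      have hstep := gfun_step (h := (2:ℝ)^e) (u := ((len - 2^e : ℕ) : ℝ))
        (by positivity) (by
          have : (len - 2^e : ℕ) + 1 ≤ 2^e := by omega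
          calc ((len - 2^e : ℕ) : ℝ) + 1 = (((len - 2^e) + 1 : ℕ) : ℝ) := by push_cast; ring
          _ ≤ ((2^e : ℕ) : ℝ) := by exact_mod_cast this
          _ = (2:ℝ)^e := by push_cast; ring)
      have hfin : ((len - 2^e : ℕ) : ℝ) + (2:ℝ)^e = (len : ℝ) := by
        have : ((len - 2^e : ℕ) : ℝ) = (len : ℝ) - ((2^e : ℕ) : ℝ) := by
          exact Nat.cast_sub h1
        rw [this]; push_cast; ring
      rw [hfin] at hstep
      calc ssum L' + Real.sqrt ((2:ℝ)^e) ≤ gfun ((len - 2^e : ℕ) : ℝ) + Real.sqrt ((2:ℝ)^e) := by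
            exact add_le_add_left hs _
        _ ≤ gfun len := by rw [add_comm]; exact hstep
lemma gfun_le {x : ℝ} (hx : 1 ≤ x) : gfun x ≤ Cc * Real.sqrt x := by
  -- (√(x+1)-1)/(√2-1) ≤ √2 √x /(√2-1)
  have hd : 0 < Real.sqrt 2 - 1 := by linarith [sqrt2_gt_one]
  rw [gfun, Cc, div_mul_eq_mul_div, div_le_div_iff_of_pos_right hd]
  have h1 : Real.sqrt (x+1) ≤ Real.sqrt x + 1 := by
    rw [← Real.sqrt_sq (by positivity : (0:ℝ) ≤ Real.sqrt x + 1)]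
    apply Real.sqrt_le_sqrt
    have : Real.sqrt x ^ 2 = x := Real.sq_sqrt (by linarith)
    nlinarith [Real.sqrt_nonneg x]
  have h2 : 1 ≤ Real.sqrt x := by
    rw [show (1:ℝ) = Real.sqrt 1 from Real.sqrt_one.symm]
    exact Real.sqrt_le_sqrt hx
  nlinarith [sqrt2_gt_one]

lemma gfun_pair {L1 L2 : ℕ} (h1 : 1 ≤ L1) (h2 : 1 ≤ L2) :
    gfun L1 + gfun L2 ≤ Cc * Real.sqrt ((L1 : ℝ) + L2) := by
  have hd : 0 < Real.sqrt 2 - 1 := by linarith [sqrt2_gt_one]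
  have hx : (0:ℝ) ≤ L1 := by positivity
  have hy : (0:ℝ) ≤ L2 := by positivity
  have key := keyB hx hy
  rw [gfun, gfun, Cc, div_mul_eq_mul_div, ← add_div, div_le_div_iff_of_pos_right hd]
  linarith

lemma main (n : ℕ) : ∀ q a b : ℕ, q * 2^n ≤ a → a < b → b ≤ (q+1) * 2^n →
    ∃ L, ChainFrom a b L ∧ AlignedL L ∧ ssum L ≤ Cc * Real.sqrt ((b:ℝ) - a) := by
  induction n with
  | zero =>
    intro q a b hqa hab hbq
    simp only [pow_zero, mul_one] at hqa hbq
    have hb : b = a + 1 := by omega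
    subst hb
    refine ⟨[(a, a+1)], ⟨rfl, by omega, rfl⟩, ?_, ?_⟩
    · intro p hp
      simp only [List.mem_singleton] at hp
      subst hp
      exact ⟨0, a, by simp, by simp⟩
    · simp only [ssum, List.map_cons, List.map_nil, List.sum_cons, List.sum_nil, add_zero]
      have : ((a+1 : ℕ) : ℝ) - (a:ℕ) = 1 := by push_cast; ring
      rw [this, Real.sqrt_one]
      linarith [Cc_ge_one]
  | succ n ih =>
    intro q a b hqa hab hbq
    set M := q * 2^(n+1) + 2^n with hM
    rcases le_or_gt b M with hbM | hMb
    · refine ih (2*q) a b ?_ hab ?_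
      · calc (2*q)*2^n = q*2^(n+1) := by ring
          _ ≤ a := hqa
      · calc b ≤ M := hbM
          _ = (2*q+1)*2^n := by rw [hM]; ring
    rcases le_or_gt M a with hMa | haM
    · refine ih (2*q+1) a b ?_ hab ?_
      · calc (2*q+1)*2^n = M := by rw [hM]; ring
          _ ≤ a := hMa
      · calc b ≤ (q+1)*2^(n+1) := hbq
          _ = (2*q+1+1)*2^n := by ring
    -- split case: a < M < b
    have hdivM : ∀ f : ℕ, 2^f ≤ 2^n → 2^f ∣ M := by
      intro f hf
      have hfn : f ≤ n := by
        by_contra hcon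
        push_neg at hcon
        have : 2^(n+1) ≤ 2^f := Nat.pow_le_pow_right (by norm_num) hcon
        have : 2^n < 2^(n+1) := Nat.pow_lt_pow_right (by norm_num) (by omega)
        omega
      have h2f : (2:ℕ)^f ∣ 2^n := Nat.pow_dvd_pow 2 hfn
      exact Nat.dvd_add (Dvd.dvd.mul_left (dvd_trans h2f (Nat.pow_dvd_pow 2 (by omega))) q) h2f
    have hlen1 : M - a ≤ 2^n := by
      have : q * 2^(n+1) ≤ a := hqa
      omega
    have hlen2 : b - M ≤ 2^n := by
      have e3 : (q+1) * 2^(n+1) = q * 2^(n+1) + (2^n + 2^n) := by ring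
      omega
    obtain ⟨L1, hc1, ha1, hs1⟩ := suf (M - a) M (by omega) (by
      intro f hf; exact hdivM f (le_trans hf hlen1))
    obtain ⟨L2, hc2, ha2, hs2⟩ := pre (b - M) M (by
      intro f hf; exact hdivM f (le_trans hf hlen2))
    have hMa' : M - (M - a) = a := by omega
    have hMb' : M + (b - M) = b := by omega
    rw [hMa'] at hc1
    rw [hMb'] at hc2
    refine ⟨L1 ++ L2, chainFrom_append hc1 hc2, ?_, ?_⟩
    · intro p hp
      rcases List.mem_append.mp hp with hp | hp
      · exact ha1 p hp
      · exact ha2 p hp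
    · have hsum : ssum (L1 ++ L2) = ssum L1 + ssum L2 := by
        simp [ssum, List.map_append, List.sum_append]
      rw [hsum]
      have hpair := gfun_pair (L1 := M - a) (L2 := b - M) (by omega) (by omega)
      have hcast : ((M - a : ℕ) : ℝ) + ((b - M : ℕ) : ℝ) = (b:ℝ) - a := by
        rw [Nat.cast_sub (by omega), Nat.cast_sub (by omega)]; ring
      rw [hcast] at hpair
      linarith

lemma decomp (a b : ℕ) (hab : a < b) :
    ∃ L, ChainFrom a b L ∧ AlignedL L ∧ ssum L ≤ Cc * Real.sqrt ((b:ℝ) - a) := by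
  exact main b 0 a b (by simp) hab (by simpa using le_of_lt (Nat.lt_two_pow_self (n := b)))
lemma pval_eq (α : ℝ) (f : ℕ → ℝ) : ∀ L : List (ℕ × ℕ),
    pval α f L = (L.map fun p => |∑ t ∈ Finset.Ico p.1 p.2, f t|).sum - α * ssum L
  | [] => by simp [pval, ssum]
  | p :: L => by
    have ih := pval_eq α f L
    simp only [pval, ssum, List.map_cons, List.sum_cons] at ih ⊢
    rw [ih]
    ring

lemma piece (α : ℝ) (hα : 0 ≤ α) (f : ℕ → ℝ) {a b : ℕ} (hab : a < b) :
    ∃ L, ChainFrom a b L ∧ AlignedL L ∧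
      |∑ t ∈ Finset.Ico a b, f t| - (Cc * α) * Real.sqrt ((b:ℝ) - (a:ℝ)) ≤ pval α f L := by
  obtain ⟨L, hc, hal, hs⟩ := decomp a b hab
  refine ⟨L, hc, hal, ?_⟩
  have h1 := abs_sum_chain f L a b hc
  rw [pval_eq]
  have h2 : α * ssum L ≤ α * (Cc * Real.sqrt ((b:ℝ) - (a:ℝ))) :=
    mul_le_mul_of_nonneg_left hs hα
  nlinarith [h1, h2]

lemma glue (α : ℝ) (hα : 0 ≤ α) (f : ℕ → ℝ) : ∀ (k : ℕ) (c : Fin (k+1) → ℕ),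
    (∀ i : Fin k, c i.castSucc < c i.succ) →
    ∃ L, ChainFrom (c 0) (c (Fin.last k)) L ∧ AlignedL L ∧
      (∑ i : Fin k, (|∑ t ∈ Finset.Ico (c i.castSucc) (c i.succ), f t| -
        (Cc * α) * Real.sqrt (((c i.succ : ℕ) : ℝ) - ((c i.castSucc : ℕ) : ℝ)))) ≤ pval α f L := by
  intro k
  induction k with
  | zero =>
    intro c _
    refine ⟨[], ?_, by simp [AlignedL], by simp [pval]⟩
    show c 0 = c (Fin.last 0)
    rfl
  | succ k ih =>
    intro c hmono
    set c' : Fin (k+1) → ℕ := fun i => c i.succ with hc'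
    have hmono' : ∀ i : Fin k, c' i.castSucc < c' i.succ := by
      intro i
      have h := hmono i.succ
      rw [← Fin.succ_castSucc] at h
      exact h
    obtain ⟨L', hch', hal', hv'⟩ := ih c' hmono'
    obtain ⟨L0, hc0, hal0, hv0⟩ := piece α hα f (hmono 0)
    refine ⟨L0 ++ L', ?_, ?_, ?_⟩
    · apply chainFrom_append
      · have h0 : (0 : Fin (k+1)).castSucc = (0 : Fin (k+2)) := rfl
        rw [h0] at hc0
        exact hc0
      · have hl : (Fin.last k).succ = Fin.last (k+1) := Fin.succ_last k
        rw [← hl]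
        exact hch'
    · intro p hp
      rcases List.mem_append.mp hp with hp | hp
      · exact hal0 p hp
      · exact hal' p hp
    · have hsplit : pval α f (L0 ++ L') = pval α f L0 + pval α f L' := by
        simp [pval, List.map_append, List.sum_append]
      rw [hsplit, Fin.sum_univ_succ]
      apply add_le_add
      · exact hv0
      · refine le_trans (le_of_eq ?_) hv'
        apply Finset.sum_congr rfl
        intro i _
        rw [← Fin.succ_castSucc]
lemma tofin (f : ℕ → ℝ) (α : ℝ) : ∀ (L : List (ℕ × ℕ)) (a b : ℕ), ChainFrom a b L →
    ∃ (k : ℕ) (c : Fin (k+1) → ℕ), StrictMono c ∧ c 0 = a ∧ c (Fin.last k) = b ∧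
      (∀ i : Fin k, (c i.castSucc, c i.succ) ∈ L) ∧
      (∑ i : Fin k, (|∑ t ∈ Finset.Ico (c i.castSucc) (c i.succ), f t| -
        α * Real.sqrt (((c i.succ : ℕ) : ℝ) - ((c i.castSucc : ℕ) : ℝ)))) = pval α f L := by
  intro L
  induction L with
  | nil =>
    intro a b hch
    refine ⟨0, fun _ => a, ?_, rfl, ?_, fun i => i.elim0, by simp [pval]⟩
    · intro x y hxy
      have hx := x.isLt
      have hy := y.isLt
      have := Fin.lt_iff_val_lt_val.mp hxy
      omega
    · exact hch.symm ▸ rfl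
  | cons p L ih =>
    intro a b hch
    obtain ⟨hp1, hp2, hchL⟩ := hch
    obtain ⟨k, c, hsm, h0, hl, hmem, hval⟩ := ih p.2 b hchL
    refine ⟨k+1, Fin.cons a c, ?_, by rw [Fin.cons_zero], ?_, ?_, ?_⟩
    · rw [Fin.strictMono_iff_lt_succ]
      intro i
      induction i using Fin.cases with
      | zero =>
        simp only [Fin.castSucc_zero, Fin.cons_zero, Fin.cons_succ, h0]
        exact hp2
      | succ j =>
        simp only [← Fin.succ_castSucc, Fin.cons_succ]
        exact hsm (Fin.castSucc_lt_succ (i := j))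
    · show (Fin.cons a c : Fin (k+2) → ℕ) (Fin.last (k+1)) = b
      rw [← Fin.succ_last, Fin.cons_succ, hl]
    · intro i
      induction i using Fin.cases with
      | zero =>
        simp only [Fin.castSucc_zero, Fin.cons_zero, Fin.cons_succ, h0]
        rw [← hp1]
        exact List.mem_cons_self
      | succ j =>
        simp only [← Fin.succ_castSucc, Fin.cons_succ]
        exact List.mem_cons_of_mem p (hmem j)
    · rw [Fin.sum_univ_succ]
      simp only [pval, List.map_cons, List.sum_cons]
      have hval' := hval
      simp only [pval] at hval'
      simp only [Fin.castSucc_zero, ← Fin.succ_castSucc, Fin.cons_succ, Fin.cons_zero, h0]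
      rw [hval', hp1]
lemma cut_le (k : ℕ) (c : Fin (k+1) → ℕ) (hsm : StrictMono c) :
    ∀ i : Fin (k+1), (i : ℕ) ≤ c i := by
  intro i
  induction i using Fin.induction with
  | zero => exact Nat.zero_le _
  | succ i ihi =>
    have h1 := hsm (Fin.castSucc_lt_succ (i := i))
    have h2 : (i.castSucc : ℕ) = (i : ℕ) := rfl
    have h3 : (i.succ : ℕ) = (i : ℕ) + 1 := rfl
    omega

lemma pointwise (T : ℕ) (α : ℝ) (hα : 0 ≤ α) (s : Fin T → ℝ) (hT : 0 < T) :
    P T (Cc * α) s ≤ PA T α s := by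
  set f : ℕ → ℝ := seqExt s with hf
  set B0 : ℝ := ∑ t ∈ Finset.range T, |f t| with hB0
  have hB0nn : 0 ≤ B0 := Finset.sum_nonneg fun t _ => abs_nonneg _
  -- bound for an arbitrary cut value with nonneg parameter
  have hbound : ∀ (β : ℝ), 0 ≤ β → ∀ (k : ℕ) (c : Fin (k+1) → ℕ), IsCutSeq T k c →
      cutValue T k β s c ≤ (T : ℝ) * B0 := by
    intro β hβ k c ⟨hsm, h0, hl⟩
    have hk : k ≤ T := by
      have := cut_le k c hsm (Fin.last k)
      rw [hl] at this
      simpa using this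
    have : cutValue T k β s c ≤ ∑ _i : Fin k, B0 := by
      apply Finset.sum_le_sum
      intro i _
      have habs : |∑ t ∈ Finset.Ico (c i.castSucc) (c i.succ), f t| ≤ B0 := by
        refine le_trans (Finset.abs_sum_le_sum_abs _ _) ?_
        rw [hB0]
        apply Finset.sum_le_sum_of_subset_of_nonneg
        · intro t ht
          simp only [Finset.mem_Ico] at ht
          simp only [Finset.mem_range]
          have hcl : c i.succ ≤ T := by
            rw [← hl]
            exact hsm.monotone (Fin.le_last _)
          omega
        · intro t _ _
          exact abs_nonneg _
      have hsqrt : 0 ≤ β * Real.sqrt ((c i.succ : ℝ) - (c i.castSucc : ℝ)) :=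
        mul_nonneg hβ (Real.sqrt_nonneg _)
      calc |∑ t ∈ Finset.Ico (c i.castSucc) (c i.succ), seqExt s t| -
            β * Real.sqrt ((c i.succ : ℝ) - (c i.castSucc : ℝ)) ≤
          |∑ t ∈ Finset.Ico (c i.castSucc) (c i.succ), f t| := by
            rw [hf]; linarith
        _ ≤ B0 := habs
    refine le_trans this ?_
    rw [Finset.sum_const, Finset.card_univ, Fintype.card_fin, nsmul_eq_mul]
    exact mul_le_mul_of_nonneg_right (by exact_mod_cast hk) hB0nn
  -- PA set is bounded above
  have hbddPA : BddAbove {v : ℝ | ∃ (k : ℕ) (c : Fin (k + 1) → ℕ), IsCutSeq T k c ∧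
      (∀ i : Fin k, ∃ e j : ℕ, c i.castSucc = j * 2 ^ e ∧ c i.succ = (j + 1) * 2 ^ e) ∧
      v = cutValue T k α s c} := by
    refine ⟨(T : ℝ) * B0, ?_⟩
    rintro v ⟨k, c, hic, _, rfl⟩
    exact hbound α hα k c hic
  -- P set is nonempty
  have hne : {v : ℝ | ∃ (k : ℕ) (c : Fin (k + 1) → ℕ), IsCutSeq T k c ∧
      v = cutValue T k (Cc * α) s c}.Nonempty := by
    obtain ⟨T', hT'⟩ := Nat.exists_eq_add_of_lt hT
    refine ⟨cutValue T T (Cc * α) s (fun i => i.val), T, fun i => i.val, ⟨?_, rfl, ?_⟩, rfl⟩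
    · exact fun _ _ h => h
    · simp [Fin.last]
  rw [P, PA]
  apply csSup_le hne
  rintro v ⟨k, c, ⟨hsm, h0, hl⟩, rfl⟩
  have hmono : ∀ i : Fin k, c i.castSucc < c i.succ := fun i => hsm (Fin.castSucc_lt_succ (i := i))
  obtain ⟨L, hch, hal, hle⟩ := glue α hα f k c hmono
  rw [h0, hl] at hch
  obtain ⟨k', c', hsm', h0', hl', hmem', hval'⟩ := tofin f α L 0 T hch
  have hw : cutValue T k' α s c' ∈ {v : ℝ | ∃ (k : ℕ) (c : Fin (k + 1) → ℕ), IsCutSeq T k c ∧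
      (∀ i : Fin k, ∃ e j : ℕ, c i.castSucc = j * 2 ^ e ∧ c i.succ = (j + 1) * 2 ^ e) ∧
      v = cutValue T k α s c} := by
    refine ⟨k', c', ⟨hsm', h0', hl'⟩, ?_, rfl⟩
    intro i
    obtain ⟨e, j, he1, he2⟩ := hal _ (hmem' i)
    exact ⟨e, j, he1, he2⟩
  have hvle : cutValue T k (Cc * α) s c ≤ cutValue T k' α s c' := by
    rw [cutValue]
    refine le_trans hle ?_
    rw [cutValue, hval']
  exact le_trans hvle (le_csSup hbddPA hw)
end StmtAux


theorem stmt_18 (m : ℕ) (α : ℝ) (hα : 0 ≤ α)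
    (h : (∑ b : Fin (2 ^ m) → Bool, PA (2 ^ m) α (fun t => pmOne (b t))) / 2 ^ (2 ^ m) ≤ 0) :
    (∑ b : Fin (2 ^ m) → Bool,
        P (2 ^ m) (Real.sqrt 2 / (Real.sqrt 2 - 1) * α) (fun t => pmOne (b t))) /
      2 ^ (2 ^ m) ≤ 0 := by
  have hpow : (0:ℝ) < 2 ^ (2 ^ m) := by positivity
  have hPA : (∑ b : Fin (2 ^ m) → Bool, PA (2 ^ m) α (fun t => pmOne (b t))) ≤ 0 := by
    rcases div_nonpos_iff.mp h with ⟨_, hb⟩ | ⟨ha, _⟩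
    · linarith
    · exact ha
  have hpt : ∀ b : Fin (2 ^ m) → Bool,
      P (2 ^ m) (Real.sqrt 2 / (Real.sqrt 2 - 1) * α) (fun t => pmOne (b t)) ≤
      PA (2 ^ m) α (fun t => pmOne (b t)) := by
    intro b
    have := StmtAux.pointwise (2 ^ m) α hα (fun t => pmOne (b t)) (Nat.two_pow_pos m)
    rw [StmtAux.Cc] at this
    exact this
  have hsum : (∑ b : Fin (2 ^ m) → Bool,
      P (2 ^ m) (Real.sqrt 2 / (Real.sqrt 2 - 1) * α) (fun t => pmOne (b t))) ≤
      (∑ b : Fin (2 ^ m) → Bool, PA (2 ^ m) α (fun t => pmOne (b t))) :=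
    Finset.sum_le_sum fun b _ => hpt b
  exact div_nonpos_of_nonpos_of_nonneg (le_trans hsum hPA) (le_of_lt hpow)
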